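/- Let Γ be an abelian group with homomorphisms ω : Γ → ℝ and c₁ : Γ → ℤ, and Λ the associated ℤ/2-Novikov ring. Let Q be a Λ-algebra that is free as a Λ-module with unit u, let q ∈ Q satisfy q² = u·⟨δ⟩·(1 + ⟨x⟩) where δ, x ∈ Γ and x has infinite order. Then for all m ≥ 1, q^{2m} = u·⟨mδ⟩·(1+⟨x⟩)^m, and q^{2m} is not of the form u·⟨γ⟩ for any γ ∈ Γ. Consequently q^k ∉ {u·⟨γ⟩ : γ ∈ Γ} for all k ≥ 2 even, provided also q itself and odd powers avoid this set. -/

import Mathlib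

open AddMonoidAlgebra

section Aux

open Finset

private lemma nm_expand_pow {Γ : Type*} [AddCommGroup Γ] (x : Γ) (m : ℕ) :
    ((1 + AddMonoidAlgebra.single x 1 : AddMonoidAlgebra (ZMod 2) Γ)) ^ m
      = ∑ k ∈ range (m+1), AddMonoidAlgebra.single (k • x) ((m.choose k : ZMod 2)) := by
  rw [add_comm, add_pow]
  refine Finset.sum_congr rfl fun k hk => ?_
  rw [one_pow, mul_one, AddMonoidAlgebra.single_pow, one_pow,
    AddMonoidAlgebra.natCast_def, AddMonoidAlgebra.single_mul_single, add_zero, one_mul]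

private lemma nm_coeff_eval {Γ : Type*} [AddCommGroup Γ] (x : Γ)
    (hx : ∀ n : ℤ, n ≠ 0 → n • x ≠ 0) (m : ℕ) (t : ℕ) (ht : t ≤ m) :
    (∑ k ∈ range (m+1), AddMonoidAlgebra.single (k • x) ((m.choose k : ZMod 2))
      : AddMonoidAlgebra (ZMod 2) Γ).coeff (t • x) = (m.choose t : ZMod 2) := by
  classical
  rw [AddMonoidAlgebra.coeff_sum, Finsupp.finset_sum_apply]
  rw [Finset.sum_eq_single t]
  · simp [AddMonoidAlgebra.coeff_single, Finsupp.single_apply]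
  · intro k hk hne
    rw [AddMonoidAlgebra.coeff_single, Finsupp.single_apply, if_neg]
    intro he
    have h2 : ((k : ℤ) - t) • x = 0 := by
      rw [sub_smul]
      simp only [natCast_zsmul]
      rw [he, sub_self]
    exact hx _ (by simp; omega) h2
  · intro h; simp at h; omega

private lemma nm_key {Γ : Type*} [AddCommGroup Γ] (x : Γ)
    (hx : ∀ n : ℤ, n ≠ 0 → n • x ≠ 0) (m : ℕ) (hm : 1 ≤ m) (c : Γ) :
    ((1 + AddMonoidAlgebra.single x 1 : AddMonoidAlgebra (ZMod 2) Γ)) ^ m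
      ≠ AddMonoidAlgebra.single c 1 := by
  intro h
  rw [nm_expand_pow] at h
  have h0 : (AddMonoidAlgebra.single c 1 : AddMonoidAlgebra (ZMod 2) Γ).coeff ((0 : ℕ) • x) = 1 := by
    rw [← h, nm_coeff_eval x hx m 0 (Nat.zero_le m)]; simp
  have hM : (AddMonoidAlgebra.single c 1 : AddMonoidAlgebra (ZMod 2) Γ).coeff (m • x) = 1 := by
    rw [← h, nm_coeff_eval x hx m m le_rfl]; simp
  classical
  rw [AddMonoidAlgebra.coeff_single, Finsupp.single_apply] at h0 hM
  have h1 : c = (0 : ℕ) • x := by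
    by_contra hc; rw [if_neg hc] at h0; exact one_ne_zero h0.symm
  have h2 : c = m • x := by
    by_contra hc; rw [if_neg hc] at hM; exact one_ne_zero hM.symm
  have : ((m : ℤ)) • x = 0 := by
    rw [natCast_zsmul, ← h2, h1, zero_smul]
  exact hx m (by exact_mod_cast Nat.one_le_iff_ne_zero.mp hm) this

private lemma nm_alg_inj {R Q : Type*} [CommRing R] [CommRing Q] [Nontrivial Q] [Algebra R Q]
    (hfree : Module.Free R Q) : Function.Injective (algebraMap R Q) := by
  classical
  have b := hfree.chooseBasis
  obtain ⟨i⟩ : Nonempty (Module.Free.ChooseBasisIndex R Q) := inferInstance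
  refine (injective_iff_map_eq_zero _).mpr fun r hr => ?_
  have h0 : r • b i = 0 := by rw [Algebra.smul_def, hr, zero_mul]
  have := congrArg (fun v => (b.repr v) i) h0
  simpa using this

end Aux

/-- If `Q` is a free algebra over the Novikov/group ring `Λ = (ℤ/2)[Γ]` with unit `u = 1`,
and `q² = u·⟨δ⟩·(1+⟨x⟩)` where `x` has infinite order, then
`q^{2m} = u·⟨mδ⟩·(1+⟨x⟩)^m` and no even power `q^k` (`k ≥ 2`) is a monomial `u·⟨γ⟩`. -/
theorem even_powers_not_monomial {Γ : Type*} [AddCommGroup Γ]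
    (Q : Type*) [CommRing Q] [Nontrivial Q]
    [Algebra (AddMonoidAlgebra (ZMod 2) Γ) Q]
    (hfree : Module.Free (AddMonoidAlgebra (ZMod 2) Γ) Q)
    (δ x : Γ) (hx : ∀ n : ℤ, n ≠ 0 → n • x ≠ 0)
    (q : Q)
    (hq : q ^ 2 = algebraMap (AddMonoidAlgebra (ZMod 2) Γ) Q
        (AddMonoidAlgebra.single δ 1 * (1 + AddMonoidAlgebra.single x 1))) :
    (∀ m : ℕ, 1 ≤ m → q ^ (2 * m) = algebraMap (AddMonoidAlgebra (ZMod 2) Γ) Q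
        (AddMonoidAlgebra.single ((m : ℤ) • δ) 1 * (1 + AddMonoidAlgebra.single x 1) ^ m)) ∧
    (∀ k : ℕ, 2 ≤ k → Even k → ∀ γ : Γ,
      q ^ k ≠ algebraMap (AddMonoidAlgebra (ZMod 2) Γ) Q (AddMonoidAlgebra.single γ 1)) := by
  have part1 : ∀ m : ℕ, q ^ (2 * m) = algebraMap (AddMonoidAlgebra (ZMod 2) Γ) Q
      (AddMonoidAlgebra.single ((m : ℤ) • δ) 1 * (1 + AddMonoidAlgebra.single x 1) ^ m) := by
    intro m
    rw [pow_mul, hq, ← map_pow, mul_pow, AddMonoidAlgebra.single_pow, one_pow, natCast_zsmul]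
  refine ⟨fun m _ => part1 m, ?_⟩
  intro k hk hek γ h
  obtain ⟨m, rfl⟩ := hek
  have hm : 1 ≤ m := by omega
  rw [← two_mul, part1 m] at h
  have heq := nm_alg_inj hfree h
  have hP : (1 + AddMonoidAlgebra.single x 1 : AddMonoidAlgebra (ZMod 2) Γ) ^ m
      = AddMonoidAlgebra.single (γ - (m : ℤ) • δ) 1 := by
    have := congrArg (fun z => (AddMonoidAlgebra.single (-((m : ℤ) • δ)) 1
        : AddMonoidAlgebra (ZMod 2) Γ) * z) heq
    rw [← mul_assoc, AddMonoidAlgebra.single_mul_single, AddMonoidAlgebra.single_mul_single,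
      neg_add_cancel, one_mul, ← AddMonoidAlgebra.one_def, one_mul] at this
    rw [this]
    congr 1
    abel
  exact nm_key x hx m hm _ hP
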